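/- arXiv:2012.06808 — 6 statements merged into one kernel-verified Lean document; each statement's English description precedes it below -/
import Mathlib

section
/- Let I be an ideal on ℕ containing all finite sets, let x be a sequence in a metric space S, and suppose there exists a compact set K ⊆ S with {n : x_n ∈ K} ∈ I⁺ (i.e., not in I). Then x has at least one I-cluster point lying in K, where η is an I-cluster point of x if {n : x_n ∈ U} ∉ I for every open neighborhood U of η. -/
/-- An ideal on ℕ: closed under subsets and finite unions, contains all finite
sets, and is proper. -/
def IsIdeal (I : Set (Set ℕ)) : Prop :=
  (∀ ⦃A B : Set ℕ⦄, A ∈ I → B ⊆ A → B ∈ I) ∧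
  (∀ ⦃A B : Set ℕ⦄, A ∈ I → B ∈ I → A ∪ B ∈ I) ∧
  (∀ A : Set ℕ, A.Finite → A ∈ I) ∧
  (Set.univ : Set ℕ) ∉ I

/-- Translation invariance of an ideal on ℕ: `(A + k) ∩ ℕ ∈ I`. -/
def TransInv (I : Set (Set ℕ)) : Prop :=
  ∀ A ∈ I, ∀ k : ℤ, {n : ℕ | ∃ a ∈ A, (a : ℤ) + k = (n : ℤ)} ∈ I

/-- η is an I-cluster point of x. -/
def IClusterPt {S : Type*} [TopologicalSpace S] (I : Set (Set ℕ)) (x : ℕ → S) (η : S) : Prop :=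
  ∀ U : Set S, IsOpen U → η ∈ U → {n : ℕ | x n ∈ U} ∉ I

/-- x is I-convergent to η. -/
def IConv {S : Type*} [TopologicalSpace S] (I : Set (Set ℕ)) (x : ℕ → S) (η : S) : Prop :=
  ∀ U : Set S, IsOpen U → η ∈ U → {n : ℕ | x n ∈ U}ᶜ ∈ I

/-- The I-limit inferior of a real sequence. -/
noncomputable def ILiminf (I : Set (Set ℕ)) (x : ℕ → ℝ) : ℝ :=
  sInf {r : ℝ | {n : ℕ | x n > r} ∉ I}

/-- The I-limit superior of a real sequence. -/
noncomputable def ILimsup (I : Set (Set ℕ)) (x : ℕ → ℝ) : ℝ :=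
  - ILiminf I (fun n => - x n)

lemma aux_union_mem {S : Type*} (I : Set (Set ℕ)) (hI : IsIdeal I) (x : ℕ → S)
    (U : S → Set S) (s : Finset S) (hs : ∀ η ∈ s, {n : ℕ | x n ∈ U η} ∈ I) :
    {n : ℕ | x n ∈ ⋃ η ∈ s, U η} ∈ I := by
  classical
  induction s using Finset.induction_on with
  | empty => simpa using hI.2.2.1 ∅ Set.finite_empty
  | insert a s' hη ih =>
    have h1 : {n : ℕ | x n ∈ ⋃ η ∈ insert a s', U η}
        ⊆ {n : ℕ | x n ∈ U a} ∪ {n : ℕ | x n ∈ ⋃ η ∈ s', U η} := by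
      intro n hn
      simp only [Finset.mem_insert, Set.mem_iUnion, Set.mem_setOf_eq, Set.mem_union] at *
      obtain ⟨η, hη, hx⟩ := hn
      rcases hη with rfl | hη
      · exact Or.inl hx
      · exact Or.inr ⟨η, hη, hx⟩
    exact hI.1 (hI.2.1 (hs a (Finset.mem_insert_self a s'))
      (ih fun η hη => hs η (Finset.mem_insert_of_mem hη))) h1

theorem cluster_point_exists_in_compact {S : Type*} [MetricSpace S]
    (I : Set (Set ℕ)) (hI : IsIdeal I) (x : ℕ → S) (K : Set S)
    (hK : IsCompact K) (hpos : {n : ℕ | x n ∈ K} ∉ I) :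
    ∃ η ∈ K, IClusterPt I x η := by
  by_contra h
  push_neg at h
  have hch : ∀ η ∈ K, ∃ U : Set S, IsOpen U ∧ η ∈ U ∧ {n : ℕ | x n ∈ U} ∈ I := by
    intro η hη
    have := h η hη
    unfold IClusterPt at this
    push_neg at this
    exact this
  choose! U hUopen hηU hUI using hch
  obtain ⟨t, htK, hcov⟩ := hK.elim_nhds_subcover U (fun η hη => (hUopen η hη).mem_nhds (hηU η hη))
  apply hpos
  exact hI.1 (aux_union_mem I hI x U t (fun η hη => hUI η (htK η hη)))
    (fun n hn => hcov hn)
end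

section
/- Let I be an ideal on ℕ and x a sequence in a metric space S such that {n : x_n ∈ K} ∈ I* for some compact K ⊆ S. Then x is I-convergent to η if and only if Γ_x(I) = {η}. -/
lemma finite_biUnion_mem {I : Set (Set ℕ)} (hI : IsIdeal I) {ι : Type*}
    (t : Finset ι) (f : ι → Set ℕ) (hf : ∀ i ∈ t, f i ∈ I) :
    (⋃ i ∈ t, f i) ∈ I := by
  classical
  induction t using Finset.induction_on with
  | empty => simpa using hI.2.2.1 ∅ Set.finite_empty
  | @insert a s hni ih =>
    rw [Finset.set_biUnion_insert]
    exact hI.2.1 (hf a (Finset.mem_insert_self a s))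
      (ih fun i hi => hf i (Finset.mem_insert_of_mem hi))

lemma exists_cluster_of_compact {S : Type*} [TopologicalSpace S]
    {I : Set (Set ℕ)} (hI : IsIdeal I) (x : ℕ → S) {C : Set S}
    (hC : IsCompact C) (h : {n : ℕ | x n ∈ C} ∉ I) :
    ∃ ξ ∈ C, IClusterPt I x ξ := by
  by_contra hcon
  push_neg at hcon
  have hch : ∀ ξ : C, ∃ U : Set S, IsOpen U ∧ (ξ : S) ∈ U ∧ {n : ℕ | x n ∈ U} ∈ I := by
    intro ξ
    have := hcon ξ ξ.2
    simp only [IClusterPt, not_forall] at this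
    obtain ⟨U, hU⟩ := this
    exact ⟨U, by tauto⟩
  choose U hUopen hUmem hUI using hch
  obtain ⟨t, ht⟩ := hC.elim_finite_subcover U hUopen
    (fun y hy => Set.mem_iUnion.2 ⟨⟨y, hy⟩, hUmem ⟨y, hy⟩⟩)
  apply h
  apply hI.1 (finite_biUnion_mem hI t (fun i => {n : ℕ | x n ∈ U i}) fun i _ => hUI i)
  intro n hn
  obtain ⟨i, hit, hni⟩ := Set.mem_iUnion₂.1 (ht hn)
  exact Set.mem_biUnion hit hni

theorem iconv_iff_singleton_cluster {S : Type*} [MetricSpace S]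
    (I : Set (Set ℕ)) (hI : IsIdeal I) (x : ℕ → S) (K : Set S)
    (hK : IsCompact K) (hKx : {n : ℕ | x n ∈ K}ᶜ ∈ I) (η : S) :
    IConv I x η ↔ {ξ : S | IClusterPt I x ξ} = {η} := by
  constructor
  · intro hc
    ext ξ
    simp only [Set.mem_setOf_eq, Set.mem_singleton_iff]
    constructor
    · intro hξ
      by_contra hne
      have hd : 0 < dist ξ η := dist_pos.2 hne
      have hsub : {n : ℕ | x n ∈ Metric.ball ξ (dist ξ η / 2)} ⊆
          {n : ℕ | x n ∈ Metric.ball η (dist ξ η / 2)}ᶜ := by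
        intro n hn hn'
        simp only [Set.mem_setOf_eq, Metric.mem_ball, Set.mem_compl_iff] at hn hn'
        have := dist_triangle ξ (x n) η
        rw [dist_comm ξ (x n)] at this
        linarith
      exact hξ _ Metric.isOpen_ball (Metric.mem_ball_self (by linarith))
        (hI.1 (hc _ Metric.isOpen_ball (Metric.mem_ball_self (by linarith))) hsub)
    · rintro rfl
      intro U hU hηU hmem
      exact hI.2.2.2 (by simpa using hI.2.1 hmem (hc U hU hηU))
  · intro hset
    intro U hU hηU
    by_contra hA
    have hCU : {n : ℕ | x n ∈ K ∩ Uᶜ} ∉ I := by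
      intro hCUI
      apply hA
      apply hI.1 (hI.2.1 hCUI hKx)
      intro n hn
      simp only [Set.mem_compl_iff, Set.mem_setOf_eq] at hn ⊢
      by_cases hk : x n ∈ K
      · exact Or.inl ⟨hk, hn⟩
      · exact Or.inr hk
    obtain ⟨ξ, hξC, hξcl⟩ := exists_cluster_of_compact hI x
      (hK.inter_right hU.isClosed_compl) hCU
    have : ξ = η := by
      have : ξ ∈ {ξ : S | IClusterPt I x ξ} := hξcl
      rwa [hset] at this
    exact hξC.2 (this ▸ hηU)
end

section
/- Let I be an ideal on ℕ, let S be a metric space, x a sequence in S such that {n : x_n ∈ K} ∈ I* for some compact K ⊆ S. Then Γ_x(I) is the smallest closed set C ⊆ S with the property that {n : x_n ∈ U} ∈ I* for every open set U containing C. -/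
theorem cluster_points_smallest_closed {S : Type*} [MetricSpace S]
    (I : Set (Set ℕ)) (hI : IsIdeal I) (x : ℕ → S) (K : Set S)
    (hK : IsCompact K) (hKx : {n : ℕ | x n ∈ K}ᶜ ∈ I) :
    IsClosed {η : S | IClusterPt I x η} ∧
    (∀ U : Set S, IsOpen U → {η : S | IClusterPt I x η} ⊆ U → {n : ℕ | x n ∈ U}ᶜ ∈ I) ∧
    (∀ C : Set S, IsClosed C →
      (∀ U : Set S, IsOpen U → C ⊆ U → {n : ℕ | x n ∈ U}ᶜ ∈ I) →
      {η : S | IClusterPt I x η} ⊆ C) := by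
  obtain ⟨hsub, hunion, hfin, hproper⟩ := hI
  refine ⟨?_, ?_, ?_⟩
  · -- closed: complement is open
    rw [← isOpen_compl_iff]
    rw [isOpen_iff_mem_nhds]
    intro η hη
    simp only [Set.mem_compl_iff, Set.mem_setOf_eq, IClusterPt] at hη
    push_neg at hη
    obtain ⟨U, hU, hηU, hUI⟩ := hη
    filter_upwards [hU.mem_nhds hηU] with ζ hζ
    simp only [Set.mem_compl_iff, Set.mem_setOf_eq, IClusterPt]
    push_neg
    exact ⟨U, hU, hζ, hUI⟩
  · intro U hU hΓU
    have hF : IsCompact (K \ U) := hK.diff hU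
    have hcover : ∀ η ∈ K \ U, ∃ V : Set S, IsOpen V ∧ η ∈ V ∧ {n : ℕ | x n ∈ V} ∈ I := by
      intro η hη
      have : η ∉ {η : S | IClusterPt I x η} := fun h => hη.2 (hΓU h)
      simp only [Set.mem_setOf_eq, IClusterPt] at this
      push_neg at this
      obtain ⟨V, hV, hηV, hVI⟩ := this
      exact ⟨V, hV, hηV, hVI⟩
    choose! V hVopen hVmem hVI using hcover
    obtain ⟨t, ht⟩ := hF.elim_finite_subcover_image
      (fun η (hη : η ∈ K \ U) => hVopen η hη)
      (fun η hη => Set.mem_biUnion hη (hVmem η hη))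
    obtain ⟨htsub, htfin, htcov⟩ := ht
    have hUnionI : {n : ℕ | x n ∈ ⋃ η ∈ t, V η} ∈ I := by
      classical
      refine Set.Finite.induction_on_subset (motive := fun s _ => {n : ℕ | x n ∈ ⋃ η ∈ s, V η} ∈ I) t htfin ?_ ?_
      · simpa using hfin ∅ Set.finite_empty
      · intro a s haT _ _ ih
        have heq : {n : ℕ | x n ∈ ⋃ η ∈ insert a s, V η}
            = {n : ℕ | x n ∈ V a} ∪ {n : ℕ | x n ∈ ⋃ η ∈ s, V η} := by
          ext n; simp [Set.mem_iUnion, or_comm]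
        rw [heq]
        exact hunion (hVI a (htsub haT)) ih
    have hss : {n : ℕ | x n ∈ U}ᶜ ⊆ {n : ℕ | x n ∈ K}ᶜ ∪ {n : ℕ | x n ∈ ⋃ η ∈ t, V η} := by
      intro n hn
      by_cases hnK : x n ∈ K
      · right
        exact htcov ⟨hnK, hn⟩
      · left; exact hnK
    exact hsub (hunion hKx hUnionI) hss
  · intro C hC hCprop η hη
    by_contra hηC
    have : Cᶜ ∈ nhds η := hC.isOpen_compl.mem_nhds hηC
    obtain ⟨ε, hε, hball⟩ := Metric.mem_nhds_iff.mp this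
    have hUopen : IsOpen (Metric.closedBall η (ε/2))ᶜ := Metric.isClosed_closedBall.isOpen_compl
    have hCU : C ⊆ (Metric.closedBall η (ε/2))ᶜ := by
      intro c hc
      intro hmem
      exact hball (Metric.closedBall_subset_ball (by linarith) hmem) hc
    have hI1 : {n : ℕ | x n ∈ (Metric.closedBall η (ε/2))ᶜ}ᶜ ∈ I := hCprop _ hUopen hCU
    have : {n : ℕ | x n ∈ Metric.ball η (ε/2)} ∈ I := by
      refine hsub hI1 ?_
      intro n hn
      simp only [Set.mem_compl_iff, Set.mem_setOf_eq, not_not]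
      exact Metric.ball_subset_closedBall hn
    exact hη (Metric.ball η (ε/2)) Metric.isOpen_ball (Metric.mem_ball_self (by linarith)) this
end

section
/- Let S, S′ be metric spaces, I an ideal on ℕ, h : S → S′ a continuous function, and x a sequence in S such that {n : x_n ∈ K} ∈ I* for some compact K ⊆ S. Then the set of I-cluster points of the sequence (h(x_n)) equals the image under h of the set of I-cluster points of x, i.e., h(Γ_x(I)) = Γ_{h(x)}(I). -/
lemma ideal_biUnion {I : Set (Set ℕ)} (hI : IsIdeal I) {α : Type*} (t : Finset α)
    (f : α → Set ℕ) (hf : ∀ i ∈ t, f i ∈ I) : (⋃ i ∈ t, f i) ∈ I := by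
  classical
  induction t using Finset.induction with
  | empty => simpa using hI.2.2.1 ∅ Set.finite_empty
  | insert _ _ hx ih =>
    rw [Finset.set_biUnion_insert]
    exact hI.2.1 (hf _ (Finset.mem_insert_self _ _))
      (ih fun i hi => hf i (Finset.mem_insert_of_mem hi))

theorem cluster_points_continuous_image {S S' : Type*} [MetricSpace S] [MetricSpace S']
    (I : Set (Set ℕ)) (hI : IsIdeal I) (h : S → S') (hh : Continuous h)
    (x : ℕ → S) (K : Set S) (hK : IsCompact K) (hKx : {n : ℕ | x n ∈ K}ᶜ ∈ I) :
    h '' {η : S | IClusterPt I x η} = {ν : S' | IClusterPt I (fun n => h (x n)) ν} := by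
  ext ν
  simp only [Set.mem_image, Set.mem_setOf_eq]
  constructor
  · rintro ⟨η, hη, rfl⟩ U hU hνU
    exact hη (h ⁻¹' U) (hU.preimage hh) hνU
  · intro hν
    by_contra hnot
    push_neg at hnot
    have key : ∀ η ∈ K, ∃ p : Set S × Set S',
        IsOpen p.1 ∧ η ∈ p.1 ∧ IsOpen p.2 ∧ ν ∈ p.2 ∧
        {n | x n ∈ p.1 ∧ h (x n) ∈ p.2} ∈ I := by
      intro η _
      by_cases hhη : h η = ν
      · have hnc : ¬ IClusterPt I x η := fun hc => hnot η hc hhη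
        unfold IClusterPt at hnc
        push_neg at hnc
        obtain ⟨U, hU, hηU, hUI⟩ := hnc
        exact ⟨(U, Set.univ), hU, hηU, isOpen_univ, trivial,
          hI.1 hUI (fun n hn => hn.1)⟩
      · have hd : 0 < dist (h η) ν := dist_pos.mpr hhη
        refine ⟨(h ⁻¹' Metric.ball (h η) (dist (h η) ν / 2),
          Metric.ball ν (dist (h η) ν / 2)),
          (Metric.isOpen_ball).preimage hh, ?_, Metric.isOpen_ball,
          Metric.mem_ball_self (by linarith), ?_⟩
        · simp [Metric.mem_ball, hd]
        · have : {n | x n ∈ h ⁻¹' Metric.ball (h η) (dist (h η) ν / 2) ∧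
              h (x n) ∈ Metric.ball ν (dist (h η) ν / 2)} = ∅ := by
            ext n
            simp only [Set.mem_setOf_eq, Set.mem_preimage, Metric.mem_ball,
              Set.mem_empty_iff_false, iff_false, not_and]
            intro h1 h2
            have := dist_triangle (h η) (h (x n)) ν
            rw [dist_comm (h η) (h (x n))] at this
            linarith
          rw [this]
          exact hI.2.2.1 ∅ Set.finite_empty
    choose p hW hηW hV hνV hmem using key
    obtain ⟨t, ht⟩ := hK.elim_nhds_subcover' (fun η hη => (p η hη).1)
      (fun η hη => (hW η hη).mem_nhds (hηW η hη))
    set V : Set S' := ⋂ i ∈ t, (p i i.2).2 with hVdef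
    have hVopen : IsOpen V := isOpen_biInter_finset fun i _ => hV i i.2
    have hνV' : ν ∈ V := Set.mem_biInter fun i _ => hνV i i.2
    have hsub : {n | h (x n) ∈ V} ⊆
        {n | x n ∈ K}ᶜ ∪ ⋃ i ∈ t, {n | x n ∈ (p i i.2).1 ∧ h (x n) ∈ (p i i.2).2} := by
      intro n hn
      by_cases hnK : x n ∈ K
      · right
        obtain ⟨i, hit, hni⟩ := Set.mem_iUnion₂.mp (ht hnK)
        exact Set.mem_biUnion hit ⟨hni, Set.mem_iInter₂.mp hn i hit⟩
      · exact Or.inl hnK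
    exact hν V hVopen hνV'
      (hI.1 (hI.2.1 hKx (ideal_biUnion hI t _ fun i _ => hmem i i.2)) hsub)
end

section
/- Let Φ : ℓ² ⇉ ℓ² be defined by Φ(x) = {(−∑_{i≥1} x_i², y_1, y_2, …) : 2x_i ≤ y_i ≤ x_i + 1/i for all i ≥ 1} ∪ {x/2}. Then for every x ∈ ℓ², Φ(x) is a nonempty compact subset of ℓ². -/
/-- The correspondence Φ on ℓ² from the infinite-dimensional example. -/
def PhiL2 (x : lp (fun _ : ℕ => ℝ) 2) : Set (lp (fun _ : ℕ => ℝ) 2) :=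
  {y : lp (fun _ : ℕ => ℝ) 2 |
      (y 0 = - ∑' i : ℕ, (x (i + 1)) ^ 2) ∧
      ∀ i : ℕ, 1 ≤ i → 2 * x i ≤ y i ∧ y i ≤ x i + 1 / i} ∪
    {(1 / 2 : ℝ) • x}


open scoped ENNReal

section PhiL2Aux

private lemma rpow_two_eq' (x : ℝ) : x ^ ((2:ℝ≥0∞).toReal) = x ^ 2 := by
  rw [show (2:ℝ≥0∞).toReal = ((2:ℕ):ℝ) by simp, Real.rpow_natCast]

private lemma memℓp_two_of_le' {f a : ℕ → ℝ} (h : ∀ i, |f i| ≤ a i)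
    (ha : Summable fun i => a i ^ 2) : Memℓp f 2 := by
  apply memℓp_gen
  have key : ∀ i, ‖f i‖ ^ ((2:ℝ≥0∞).toReal) = |f i| ^ 2 := fun i => by
    rw [rpow_two_eq', Real.norm_eq_abs]
  refine Summable.of_nonneg_of_le (fun i => by rw [key]; positivity)
    (fun i => by rw [key]; exact pow_le_pow_left₀ (abs_nonneg _) (h i) 2) ha

private lemma hp2' : (0:ℝ) < (2:ℝ≥0∞).toReal := by simp

private lemma norm_sq_tail' (z : lp (fun _ : ℕ => ℝ) 2) (N : ℕ) :
    ‖z - ∑ i ∈ Finset.range N, lp.single 2 i (z i)‖ ^ 2 = ∑' i, (z (i + N)) ^ 2 := by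
  have hs : Summable fun i => ‖z i‖ ^ ((2:ℝ≥0∞).toReal) := (lp.memℓp z).summable hp2'
  have h1 := lp.norm_compl_sum_single hp2' z (Finset.range N)
  have h2 := lp.norm_rpow_eq_tsum hp2' z
  rw [h2] at h1
  rw [← (Summable.sum_add_tsum_nat_add N hs)] at h1
  rw [← rpow_two_eq']
  rw [h1]
  ring_nf
  refine tsum_congr fun i => ?_
  rw [rpow_two_eq', Real.norm_eq_abs, sq_abs]

private lemma isCompact_box' {a : ℕ → ℝ} (ha : Summable fun i => a i ^ 2) :
    IsCompact {z : lp (fun _ : ℕ => ℝ) 2 | ∀ i, |z i| ≤ a i} := by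
  let C := ∀ i : ℕ, Set.Icc (-(a i)) (a i)
  let g : C → lp (fun _ : ℕ => ℝ) 2 := fun f =>
    ⟨fun i => (f i : ℝ), memℓp_two_of_le' (fun i => abs_le.2 ⟨(f i).2.1, (f i).2.2⟩) ha⟩
  have hgapp : ∀ (f : C) (i : ℕ), g f i = (f i : ℝ) := fun f i => rfl
  have hcont : ∀ N, Continuous fun f : C => ∑ i ∈ Finset.range N, lp.single 2 i ((f i : ℝ)) := by
    intro N
    refine continuous_finset_sum _ fun i _ => ?_
    have : (fun f : C => lp.single (E := fun _ : ℕ => ℝ) 2 i ((f i : ℝ)))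
        = fun f : C => ((f i : ℝ)) • lp.single (E := fun _ : ℕ => ℝ) 2 i (1:ℝ) := by
      funext f
      rw [← lp.single_smul, smul_eq_mul, mul_one]
    rw [this]
    exact ((continuous_apply (A := fun i : ℕ => Set.Icc (-(a i)) (a i)) i).subtype_val).smul continuous_const
  have huni : TendstoUniformly
      (fun N (f : C) => ∑ i ∈ Finset.range N, lp.single 2 i ((f i : ℝ))) g Filter.atTop := by
    rw [Metric.tendstoUniformly_iff]
    intro ε hε
    have htail : Filter.Tendsto (fun N => ∑' i, a (i + N) ^ 2) Filter.atTop (nhds 0) :=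
      tendsto_sum_nat_add (fun i => a i ^ 2)
    filter_upwards [htail.eventually (gt_mem_nhds (by positivity : (0:ℝ) < ε ^ 2))] with N hN f
    rw [dist_eq_norm]
    have hb : ‖g f - ∑ i ∈ Finset.range N, lp.single 2 i ((f i : ℝ))‖ ^ 2
        ≤ ∑' i, a (i + N) ^ 2 := by
      have := norm_sq_tail' (g f) N
      simp only [hgapp] at this
      rw [this]
      refine Summable.tsum_le_tsum (fun i => ?_) ?_ ((summable_nat_add_iff N).2 ha)
      · calc ((f (i + N) : ℝ)) ^ 2 = |(f (i + N) : ℝ)| ^ 2 := (sq_abs _).symm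
        _ ≤ a (i + N) ^ 2 := pow_le_pow_left₀ (abs_nonneg _)
            (abs_le.2 ⟨(f (i+N)).2.1, (f (i+N)).2.2⟩) 2
      · refine Summable.of_nonneg_of_le (fun i => sq_nonneg _) (fun i => ?_)
          ((summable_nat_add_iff N).2 ha)
        calc ((f (i + N) : ℝ)) ^ 2 = |(f (i + N) : ℝ)| ^ 2 := (sq_abs _).symm
        _ ≤ a (i + N) ^ 2 := pow_le_pow_left₀ (abs_nonneg _)
            (abs_le.2 ⟨(f (i+N)).2.1, (f (i+N)).2.2⟩) 2
    exact lt_of_pow_lt_pow_left₀ 2 hε.le (lt_of_le_of_lt hb hN)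
  have hg : Continuous g := huni.continuous (Filter.Frequently.of_forall hcont)
  have hrange : {z : lp (fun _ : ℕ => ℝ) 2 | ∀ i, |z i| ≤ a i} = Set.range g := by
    ext z
    constructor
    · intro hz
      exact ⟨fun i => ⟨z i, (abs_le.1 (hz i)).1, (abs_le.1 (hz i)).2⟩, lp.ext rfl⟩
    · rintro ⟨f, rfl⟩ i
      exact abs_le.2 ⟨(f i).2.1, (f i).2.2⟩
  rw [hrange]
  exact isCompact_range hg

private lemma continuous_eval' (i : ℕ) : Continuous fun z : lp (fun _ : ℕ => ℝ) 2 => z i :=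
  (continuous_apply i).comp (lp.uniformContinuous_coe (p := 2)).continuous

end PhiL2Aux

theorem PhiL2_nonempty_compact (x : lp (fun _ : ℕ => ℝ) 2) :
    (PhiL2 x).Nonempty ∧ IsCompact (PhiL2 x) := by
  constructor
  · exact ⟨(1/2 : ℝ) • x, Or.inr rfl⟩
  · set c : ℝ := - ∑' i : ℕ, (x (i + 1)) ^ 2 with hc
    set A : Set (lp (fun _ : ℕ => ℝ) 2) :=
      {y | (y 0 = c) ∧ ∀ i : ℕ, 1 ≤ i → 2 * x i ≤ y i ∧ y i ≤ x i + 1 / i} with hA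
    have hPhi : PhiL2 x = A ∪ {(1/2 : ℝ) • x} := rfl
    rw [hPhi]
    refine IsCompact.union ?_ isCompact_singleton
    -- the dominating sequence
    set a : ℕ → ℝ := fun i => 2 * |x i| + 1/(i:ℝ) + (if i = 0 then |c| else 0) with ha
    have hamem : Memℓp a 2 := by
      have h1 : Memℓp (fun i : ℕ => 2 * |x i|) 2 := by
        refine Memℓp.const_mul ?_ 2
        apply memℓp_gen
        refine ((lp.memℓp x).summable (by simp)).congr fun i => ?_
        simp [Real.norm_eq_abs]
      have h2 : Memℓp (fun i : ℕ => 1/(i:ℝ)) 2 := by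
        apply memℓp_gen
        refine (Real.summable_one_div_nat_pow.mpr one_lt_two).congr fun i => ?_
        rw [show ((2:ℝ≥0∞).toReal) = ((2:ℕ):ℝ) by simp, Real.rpow_natCast]
        rw [Real.norm_eq_abs, abs_of_nonneg (by positivity), one_div_pow]
      have h3 : Memℓp (fun i : ℕ => if i = 0 then |c| else 0) 2 := by
        refine (memℓp_zero ?_).of_exponent_ge zero_le
        refine (Set.finite_singleton 0).subset fun i hi => ?_
        simp only [Set.mem_setOf_eq, ne_eq, ite_eq_right_iff, not_forall] at hi
        simp [hi.1]
      exact (h1.add h2).add h3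
    have hasum : Summable fun i => a i ^ 2 := by
      refine (hamem.summable hp2').congr fun i => ?_
      have h0 : 0 ≤ a i := by
        rw [ha]
        have : (0:ℝ) ≤ 1/(i:ℝ) := by positivity
        positivity
      rw [rpow_two_eq', Real.norm_eq_abs, abs_of_nonneg h0]
    refine IsCompact.of_isClosed_subset (isCompact_box' hasum) ?_ ?_
    · -- A is closed
      have hrepr : A = ({y : lp (fun _ : ℕ => ℝ) 2 | y 0 = c} ∩
          ⋂ (i : ℕ), ⋂ (_ : 1 ≤ i),
            ({y : lp (fun _ : ℕ => ℝ) 2 | 2 * x i ≤ y i} ∩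
             {y : lp (fun _ : ℕ => ℝ) 2 | y i ≤ x i + 1 / i})) := by
        ext y
        simp only [hA, Set.mem_setOf_eq, Set.mem_inter_iff, Set.mem_iInter]
      rw [hrepr]
      refine IsClosed.inter (isClosed_eq (continuous_eval' 0) continuous_const) ?_
      refine isClosed_iInter fun i => isClosed_iInter fun _ => IsClosed.inter ?_ ?_
      · exact isClosed_le continuous_const (continuous_eval' i)
      · exact isClosed_le (continuous_eval' i) continuous_const
    · -- A ⊆ box
      intro y hy i
      rcases hy with ⟨h0, hrest⟩
      rcases Nat.eq_zero_or_pos i with rfl | hi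
      · rw [h0]
        have h1 : a 0 = 2 * |x 0| + |c| := by simp [ha]
        rw [h1]
        have : (0:ℝ) ≤ 2 * |x 0| := by positivity
        linarith
      · rcases hrest i hi with ⟨hl, hr⟩
        have hne : i ≠ 0 := Nat.pos_iff_ne_zero.mp hi
        have h1 : a i = 2 * |x i| + 1/(i:ℝ) := by simp [ha, hne]
        rw [h1, abs_le]
        constructor
        · have : -(2 * |x i|) ≤ 2 * x i := by
            have := neg_abs_le (x i); linarith
          have h2 : (0:ℝ) ≤ 1/(i:ℝ) := by positivity
          linarith
        · have : x i ≤ |x i| := le_abs_self _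
          have h2 : (0:ℝ) ≤ |x i| := abs_nonneg _
          linarith
end

section
/- Let Φ : ℓ² ⇉ ℓ² be defined by Φ(x) = {(−∑_{i≥1} x_i², y_1, y_2, …) : 2x_i ≤ y_i ≤ x_i + 1/i for all i ≥ 1} ∪ {x/2}. Then the fixed-point set of Φ is Fix(Φ) = {x ∈ ℓ² : x_0 = −∑_{i≥1} x_i² and x_j ≤ 0 for all j ≥ 1}, and the linear functional u(x) = x_0 restricted to Fix(Φ) has the zero sequence as its unique maximizer. -/
lemma phi_summable (x : lp (fun _ : ℕ => ℝ) 2) :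
    Summable (fun i : ℕ => (x (i + 1)) ^ 2) := by
  have h := lp.memℓp x
  have h2 : Summable (fun i : ℕ => ‖x i‖ ^ (2 : ENNReal).toReal) := by
    apply memℓp_gen_iff (by norm_num) |>.1 h
  have h3 : Summable (fun i : ℕ => (x i) ^ 2) := by
    convert h2 using 2 with i
    simp [Real.norm_eq_abs, ENNReal.toReal_ofNat, ← sq_abs]
  exact (summable_nat_add_iff 1).2 h3

lemma fix_iff (x : lp (fun _ : ℕ => ℝ) 2) :
    x ∈ PhiL2 x ↔
      (x 0 = - ∑' i : ℕ, (x (i + 1)) ^ 2 ∧ ∀ j : ℕ, 1 ≤ j → x j ≤ 0) := by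
  constructor
  · rintro (⟨h0, h⟩ | hx)
    · exact ⟨h0, fun j hj => by have := (h j hj).1; linarith⟩
    · simp only [Set.mem_singleton_iff] at hx
      have hz : ∀ n, x n = 0 := by
        intro n
        have := congrFun (congrArg (fun f : lp (fun _ : ℕ => ℝ) 2 => (f : ℕ → ℝ)) hx) n
        have h2 : x n = (1/2 : ℝ) * x n := by
          simpa [lp.coeFn_smul] using this
        linarith
      constructor
      · simp [hz]
      · intro j _; simp [hz]
  · rintro ⟨h0, h⟩
    left
    refine ⟨h0, fun i hi => ⟨by nlinarith [h i hi], ?_⟩⟩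
    have : (0:ℝ) ≤ 1 / i := by positivity
    linarith

theorem PhiL2_fixed_points_unique_maximizer :
    ({x : lp (fun _ : ℕ => ℝ) 2 | x ∈ PhiL2 x} =
      {x : lp (fun _ : ℕ => ℝ) 2 |
        x 0 = - ∑' i : ℕ, (x (i + 1)) ^ 2 ∧ ∀ j : ℕ, 1 ≤ j → x j ≤ 0}) ∧
    ((0 : lp (fun _ : ℕ => ℝ) 2) ∈ {x : lp (fun _ : ℕ => ℝ) 2 | x ∈ PhiL2 x}) ∧
    (∀ x ∈ {x : lp (fun _ : ℕ => ℝ) 2 | x ∈ PhiL2 x}, x 0 ≤ (0 : ℝ)) ∧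
    (∀ x ∈ {x : lp (fun _ : ℕ => ℝ) 2 | x ∈ PhiL2 x},
      x ≠ 0 → x 0 < (0 : ℝ)) := by
  have key : ∀ x ∈ {x : lp (fun _ : ℕ => ℝ) 2 | x ∈ PhiL2 x},
      x ≠ 0 → x 0 < (0 : ℝ) := by
    intro x hx hne
    obtain ⟨h0, h⟩ := (fix_iff x).1 hx
    by_contra hlt
    push_neg at hlt
    have hS : ∑' i : ℕ, (x (i + 1)) ^ 2 ≤ 0 := by linarith
    have hall : ∀ n, x n = 0 := by
      intro n
      by_contra hn
      cases n with
      | zero =>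
        have hpos : 0 < ∑' i : ℕ, (x (i + 1)) ^ 2 ∨ (0:ℝ) = ∑' i : ℕ, (x (i + 1)) ^ 2 := by
          rcases lt_or_eq_of_le (tsum_nonneg (fun i => sq_nonneg (x (i+1)))) with h1 | h1
          · exact Or.inl h1
          · exact Or.inr h1
        rcases hpos with h1 | h1
        · linarith
        · exact hn (by rw [h0, ← h1]; simp)
      | succ m =>
        have hpos : 0 < ∑' i : ℕ, (x (i + 1)) ^ 2 :=
          Summable.tsum_pos (phi_summable x) (fun i => sq_nonneg _) m (by positivity)
        linarith
    exact hne (lp.ext (funext hall))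
  refine ⟨?_, ?_, ?_, key⟩
  · ext x; exact fix_iff x
  · refine (fix_iff 0).2 ⟨?_, ?_⟩ <;> simp
  · intro x hx
    by_cases hne : x = 0
    · subst hne; simp
    · exact le_of_lt (key x hx hne)
end
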